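/- (Multivariate Nielsen-type multiplication theorem, m even) For every even positive integer m, every positive integer k, every natural number n with n ≥ k, every vector a = (a₁, …, a_k) of nonzero real numbers, and every real number x, m^{k-n} · (-1/2)^k · ( n! / (n-k)! ) · ( ∏_{i=1}^{k} a_i ) · E_{n-k}^{(k)}(m x | a) = Σ_{l₁=0}^{m-1} ⋯ Σ_{l_k=0}^{m-1} (-1)^{l₁ + ⋯ + l_k} B_n^{(k)}( x + (1/m) Σ_{i=1}^{k} a_i l_i | a ). -/

import Mathlib

open PowerSeries Finset

private lemma eps_zero' : PowerSeries.rescale (0:ℝ) (PowerSeries.exp ℝ) = 1 := by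
  rw [rescale_zero]
  simp [constantCoeff_exp]

private lemma eps_pow' (c : ℝ) (i : ℕ) :
    PowerSeries.rescale c (PowerSeries.exp ℝ) ^ i
      = PowerSeries.rescale ((i : ℝ) * c) (PowerSeries.exp ℝ) := by
  induction i with
  | zero => simp [eps_zero']
  | succ i ih =>
      rw [pow_succ, ih, exp_mul_exp_eq_exp_add]
      congr 1
      push_cast
      ring

private lemma eps_sum' {ι : Type*} (s : Finset ι) (c : ι → ℝ) :
    ∏ j ∈ s, PowerSeries.rescale (c j) (PowerSeries.exp ℝ)
      = PowerSeries.rescale (∑ j ∈ s, c j) (PowerSeries.exp ℝ) := by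
  induction s using Finset.cons_induction with
  | empty => simp [eps_zero']
  | cons j s hj ih => rw [Finset.prod_cons, ih, exp_mul_exp_eq_exp_add, Finset.sum_cons]

private lemma eps_sub_one_ne' (c : ℝ) (hc : c ≠ 0) :
    PowerSeries.rescale c (PowerSeries.exp ℝ) - 1 ≠ 0 := by
  intro h
  have h1 := congrArg (PowerSeries.coeff 1) h
  simp [coeff_exp, PowerSeries.coeff_one] at h1
  exact hc h1

private lemma eps_add_one_ne' (c : ℝ) :
    PowerSeries.rescale c (PowerSeries.exp ℝ) + 1 ≠ 0 := by
  intro h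
  have h1 := congrArg (PowerSeries.coeff 0) h
  rw [map_add, coeff_rescale] at h1
  norm_num [coeff_exp, PowerSeries.coeff_one] at h1

private lemma rescale_C' (b c : ℝ) :
    PowerSeries.rescale b (PowerSeries.C c) = PowerSeries.C c := by
  ext i
  simp only [coeff_rescale, PowerSeries.coeff_C]
  split_ifs with h
  · subst h; simp
  · simp

/-- Multivariate Nielsen-type multiplication theorem (`m` even):
`m^{k-n} (-1/2)^k (n!/(n-k)!) (∏ᵢ aᵢ) E_{n-k}^{(k)}(m x | a)
  = Σ_{l₁,…,l_k=0}^{m-1} (-1)^{l₁+⋯+l_k} B_n^{(k)}(x + (1/m) Σ_i a_i l_i | a)`,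
where `B_n^{(k)}(x|a)` has generating function `e^{x t} ∏_j (a_j t/(e^{a_j t}-1))`
and `E_n^{(k)}(x|a)` has generating function `e^{x t} ∏_j (2/(e^{a_j t}+1))`. -/
theorem statement_19 (m : ℕ) (hm0 : 0 < m) (hm : Even m) (n k : ℕ) (hk : 0 < k)
    (hkn : k ≤ n) (a : Fin k → ℝ) (ha : ∀ j, a j ≠ 0) (x : ℝ)
    (B E : ℝ → ℕ → ℝ)
    (hB : ∀ y : ℝ, (PowerSeries.mk fun i => B y i / (i.factorial : ℝ)) *
        (∏ j, (PowerSeries.rescale (a j) (PowerSeries.exp ℝ) - 1)) =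
      PowerSeries.C (∏ j, a j) * PowerSeries.X ^ k *
        PowerSeries.rescale y (PowerSeries.exp ℝ))
    (hE : ∀ y : ℝ, (PowerSeries.mk fun i => E y i / (i.factorial : ℝ)) *
        (∏ j, (PowerSeries.rescale (a j) (PowerSeries.exp ℝ) + 1)) =
      PowerSeries.C ((2 : ℝ) ^ k) * PowerSeries.rescale y (PowerSeries.exp ℝ)) :
    (m : ℝ) ^ ((k : ℤ) - (n : ℤ)) * (-(1 / 2) : ℝ) ^ k *
        ((n.factorial : ℝ) / ((n - k).factorial : ℝ)) * (∏ i, a i) *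
        E ((m : ℝ) * x) (n - k) =
      ∑ l : Fin k → Fin m,
        (-1 : ℝ) ^ (∑ i, (l i : ℕ)) *
          B (x + (1 / (m : ℝ)) * ∑ i, a i * ((l i : ℕ) : ℝ)) n := by
  classical
  have hmR : (m : ℝ) ≠ 0 := Nat.cast_ne_zero.mpr hm0.ne'
  set u : Fin k → ℝ⟦X⟧ := fun j => rescale (a j / m) (exp ℝ) with hudef
  set P : ℝ⟦X⟧ := ∏ j, (rescale (a j) (exp ℝ) - 1) with hPdef
  set Q : ℝ⟦X⟧ := ∏ j, (u j + 1) with hQdef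
  set S : Fin k → ℝ⟦X⟧ :=
    fun j => ∑ l : Fin m, PowerSeries.C ((-1 : ℝ) ^ (l : ℕ)) * u j ^ (l : ℕ) with hSdef
  set G : ℝ⟦X⟧ := ∑ l : Fin k → Fin m,
      PowerSeries.C ((-1 : ℝ) ^ (∑ i, (l i : ℕ))) *
        PowerSeries.mk (fun i =>
          B (x + (1 / (m : ℝ)) * ∑ i, a i * ((l i : ℕ) : ℝ)) i / (i.factorial : ℝ)) with hGdef
  set H : ℝ⟦X⟧ := rescale (1 / (m : ℝ))
      (PowerSeries.mk fun i => E ((m : ℝ) * x) i / (i.factorial : ℝ)) with hHdef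
  -- Step A: per-coordinate geometric identity
  have stepA : ∀ j, S j * (u j + 1) = 1 - rescale (a j) (exp ℝ) := by
    intro j
    have hup : u j ^ m = rescale (a j) (exp ℝ) := by
      rw [hudef]
      simp only
      rw [eps_pow']
      congr 1
      field_simp
    have hS : S j = ∑ i ∈ Finset.range m, (-(u j)) ^ i := by
      rw [hSdef]
      simp only
      rw [Fin.sum_univ_eq_sum_range (fun i => PowerSeries.C ((-1 : ℝ) ^ i) * u j ^ i)]
      refine Finset.sum_congr rfl fun i _ => ?_
      rw [show (-(u j)) = PowerSeries.C (-1) * u j from by simp, mul_pow,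
        show (PowerSeries.C (-1 : ℝ)) ^ i = PowerSeries.C ((-1 : ℝ) ^ i) from
          (map_pow _ _ _).symm]
    have hg := geom_sum_mul (-(u j)) m
    have hneg : (∑ i ∈ Finset.range m, (-(u j)) ^ i) * (u j + 1)
        = -((∑ i ∈ Finset.range m, (-(u j)) ^ i) * (-(u j) - 1)) := by ring
    rw [hS, hneg, hg, hm.neg_pow, hup]
    ring
  -- exponential of shifted argument
  have hexp : ∀ l : Fin k → Fin m,
      rescale (x + (1 / (m : ℝ)) * ∑ i, a i * ((l i : ℕ) : ℝ)) (exp ℝ)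
        = rescale x (exp ℝ) * ∏ j, u j ^ ((l j : ℕ)) := by
    intro l
    have : ∀ j : Fin k, u j ^ ((l j : ℕ))
        = rescale (((l j : ℕ) : ℝ) * (a j / m)) (exp ℝ) := fun j => by
      rw [hudef]; exact eps_pow' _ _
    have harg : x + (1 / (m : ℝ)) * ∑ i, a i * ((l i : ℕ) : ℝ)
        = x + ∑ j, ((l j : ℕ) : ℝ) * (a j / m) := by
      rw [Finset.mul_sum]
      congr 1
      exact Finset.sum_congr rfl fun i _ => by ring
    rw [harg]
    simp only [this]
    rw [eps_sum', exp_mul_exp_eq_exp_add]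
  -- Step D: G * P
  have hGP : G * P = PowerSeries.C (∏ j, a j) * X ^ k *
      (rescale x (exp ℝ) * ∏ j, S j) := by
    rw [hGdef, Finset.sum_mul]
    have h1 : ∀ l : Fin k → Fin m,
        PowerSeries.C ((-1 : ℝ) ^ (∑ i, (l i : ℕ))) *
          PowerSeries.mk (fun i =>
            B (x + (1 / (m : ℝ)) * ∑ i, a i * ((l i : ℕ) : ℝ)) i / (i.factorial : ℝ)) * P
        = PowerSeries.C (∏ j, a j) * X ^ k *
            (rescale x (exp ℝ) * ∏ j, (PowerSeries.C ((-1 : ℝ) ^ ((l j : ℕ))) *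
              u j ^ ((l j : ℕ)))) := by
      intro l
      rw [mul_assoc, hB, hexp l, Finset.prod_mul_distrib, ← map_prod,
        Finset.prod_pow_eq_pow_sum]
      ring
    rw [Finset.sum_congr rfl fun l _ => h1 l, ← Finset.mul_sum]
    congr 1
    rw [← Finset.mul_sum]
    congr 1
    rw [hSdef]
    simp only
    rw [Finset.prod_univ_sum]
    rw [Fintype.piFinset_univ]
  -- Step E: H * Q
  have hE' : H * Q = PowerSeries.C ((2 : ℝ) ^ k) * rescale x (exp ℝ) := by
    have h0 := congrArg (rescale (1 / (m : ℝ))) (hE ((m : ℝ) * x))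
    rw [map_mul, map_mul, map_prod] at h0
    have h1 : ∀ j : Fin k, rescale (1 / (m : ℝ)) (rescale (a j) (exp ℝ) + 1)
        = u j + 1 := fun j => by
      rw [map_add, map_one, rescale_rescale, hudef]
      simp only
      rw [mul_one_div]
    have h2 : rescale (1 / (m : ℝ)) (rescale ((m : ℝ) * x) (exp ℝ))
        = rescale x (exp ℝ) := by
      rw [rescale_rescale]
      congr 1
      field_simp
    rw [Finset.prod_congr rfl fun j _ => h1 j, h2, rescale_C'] at h0
    rw [hHdef, hQdef]
    exact h0
  -- product of 1 - exp terms
  have hB' : ∏ j, (1 - rescale (a j) (exp ℝ)) = PowerSeries.C ((-1 : ℝ) ^ k) * P := by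
    have h1 : ∀ j : Fin k, (1 : ℝ⟦X⟧) - rescale (a j) (exp ℝ)
        = (-1) * (rescale (a j) (exp ℝ) - 1) := fun j => by ring
    rw [Finset.prod_congr rfl fun j _ => h1 j, Finset.prod_mul_distrib,
      Finset.prod_const, Finset.card_univ, Fintype.card_fin, hPdef]
    congr 1
    rw [map_pow, map_neg, map_one]
  -- key identity and cancellation
  have hPne : P ≠ 0 := by
    rw [hPdef]
    exact Finset.prod_ne_zero_iff.mpr fun j _ => eps_sub_one_ne' _ (ha j)
  have hQne : Q ≠ 0 := by
    rw [hQdef]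
    exact Finset.prod_ne_zero_iff.mpr fun j _ => eps_add_one_ne' _
  have hPQ : P * Q ≠ 0 := mul_ne_zero hPne hQne
  have hconst : (-(1 / 2) : ℝ) ^ k * (2 : ℝ) ^ k = (-1 : ℝ) ^ k := by
    rw [← mul_pow]; norm_num
  have key : G * (P * Q) = (PowerSeries.C ((-(1 / 2) : ℝ) ^ k * ∏ j, a j) * X ^ k * H)
      * (P * Q) := by
    calc G * (P * Q) = (G * P) * Q := by ring
      _ = PowerSeries.C (∏ j, a j) * X ^ k * rescale x (exp ℝ) *
            ((∏ j, S j) * Q) := by rw [hGP]; ring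
      _ = PowerSeries.C (∏ j, a j) * X ^ k * rescale x (exp ℝ) *
            (∏ j, (S j * (u j + 1))) := by rw [hQdef, ← Finset.prod_mul_distrib]
      _ = PowerSeries.C (∏ j, a j) * X ^ k * rescale x (exp ℝ) *
            (PowerSeries.C ((-1 : ℝ) ^ k) * P) := by
            rw [Finset.prod_congr rfl fun j _ => stepA j, hB']
      _ = (PowerSeries.C ((-(1 / 2) : ℝ) ^ k * ∏ j, a j) * X ^ k * H) * (P * Q) := by
            have hc : PowerSeries.C ((-(1 / 2) : ℝ) ^ k) * PowerSeries.C ((2 : ℝ) ^ k)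
                = PowerSeries.C ((-1 : ℝ) ^ k) := by rw [← map_mul, hconst]
            rw [show (PowerSeries.C ((-(1 / 2) : ℝ) ^ k * ∏ j, a j))
              = PowerSeries.C ((-(1 / 2) : ℝ) ^ k) * PowerSeries.C (∏ j, a j) from
              map_mul _ _ _]
            rw [show (PowerSeries.C ((-(1 / 2) : ℝ) ^ k) * PowerSeries.C (∏ j, a j)
                  * X ^ k * H) * (P * Q)
                = PowerSeries.C ((-(1 / 2) : ℝ) ^ k) * (PowerSeries.C (∏ j, a j) * X ^ k)
                  * (H * Q) * P from by ring, hE']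
            rw [show PowerSeries.C ((-(1 / 2) : ℝ) ^ k) * (PowerSeries.C (∏ j, a j) * X ^ k)
                  * (PowerSeries.C ((2 : ℝ) ^ k) * rescale x (exp ℝ)) * P
                = PowerSeries.C (∏ j, a j) * X ^ k * rescale x (exp ℝ)
                  * ((PowerSeries.C ((-(1 / 2) : ℝ) ^ k) * PowerSeries.C ((2 : ℝ) ^ k)) * P)
              from by ring, hc]
  have hGH : G = PowerSeries.C ((-(1 / 2) : ℝ) ^ k * ∏ j, a j) * X ^ k * H :=
    mul_right_cancel₀ hPQ key
  -- take coefficient n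
  have hcoeff := congrArg (PowerSeries.coeff n) hGH
  rw [hGdef] at hcoeff
  rw [map_sum] at hcoeff
  simp only [PowerSeries.coeff_C_mul, PowerSeries.coeff_mk] at hcoeff
  have hXH : PowerSeries.coeff n (X ^ k * H)
      = (1 / (m : ℝ)) ^ (n - k) * (E ((m : ℝ) * x) (n - k) / ((n - k).factorial : ℝ)) := by
    rw [show n = (n - k) + k from (Nat.sub_add_cancel hkn).symm, coeff_X_pow_mul, hHdef,
      coeff_rescale, PowerSeries.coeff_mk]
    simp
  rw [mul_assoc, PowerSeries.coeff_C_mul, hXH] at hcoeff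
  -- final arithmetic
  have hn1 : (n.factorial : ℝ) ≠ 0 := Nat.cast_ne_zero.mpr n.factorial_ne_zero
  have hn2 : ((n - k).factorial : ℝ) ≠ 0 := Nat.cast_ne_zero.mpr (n - k).factorial_ne_zero
  have hsum : ∑ l : Fin k → Fin m,
      (-1 : ℝ) ^ (∑ i, (l i : ℕ)) * B (x + (1 / (m : ℝ)) * ∑ i, a i * ((l i : ℕ) : ℝ)) n
      = (n.factorial : ℝ) * ∑ l : Fin k → Fin m,
        (-1 : ℝ) ^ (∑ i, (l i : ℕ)) *
          (B (x + (1 / (m : ℝ)) * ∑ i, a i * ((l i : ℕ) : ℝ)) n / (n.factorial : ℝ)) := by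
    rw [Finset.mul_sum]
    refine Finset.sum_congr rfl fun l _ => ?_
    field_simp
  rw [hsum, hcoeff]
  have hz : (m : ℝ) ^ ((k : ℤ) - (n : ℤ)) = (1 / (m : ℝ)) ^ (n - k) := by
    have h3 : (k : ℤ) - (n : ℤ) = -((n - k : ℕ) : ℤ) := by
      have : ((n - k : ℕ) : ℤ) = (n : ℤ) - (k : ℤ) := by
        omega
      omega
    rw [h3, zpow_neg, zpow_natCast, one_div, inv_pow]
  rw [hz]
  field_simp
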